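/- arXiv:2102.00698 — 2 statements merged into one kernel-verified Lean document; each statement's English description precedes it below -/
import Mathlib

section
/- Assume #V ≥ 2 and let a ∈ ℝ. If κ̲(x,y) ≥ a for every pair x ≠ y with x ∼ y, then κ̲(x,y) ≥ a for every pair x ≠ y in V. -/
open scoped BigOperators

noncomputable section

namespace HypRicci

variable {V : Type*} [Fintype V] [DecidableEq V]

/-- A finite weighted hypergraph on vertex set `V`: a finite set of nonempty
hyperedges together with positive weights. -/
structure Hypergraph (V : Type*) [Fintype V] [DecidableEq V] : Type _ where
  E : Finset (Finset V)
  w : Finset V → ℝ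
  w_pos : ∀ e ∈ E, 0 < w e
  e_nonempty : ∀ e ∈ E, e.Nonempty

/-- Degree `d_x = ∑_{e ∋ x} w(e)`. -/
def deg (H : Hypergraph V) (x : V) : ℝ := ∑ e ∈ H.E, if x ∈ e then H.w e else 0

/-- Volume `vol(V) = ∑_x d_x`. -/
def vol (H : Hypergraph V) : ℝ := ∑ x, deg H x

/-- Weighted inner product `⟨f,g⟩ = ∑_x f(x) g(x) / d_x`. -/
def inn (H : Hypergraph V) (f g : V → ℝ) : ℝ := ∑ x, f x * g x / deg H x

/-- Norm associated to `inn`. -/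
def nrm (H : Hypergraph V) (f : V → ℝ) : ℝ := Real.sqrt (inn H f f)

/-- Indicator function `δ_x`. -/
def delta (x : V) : V → ℝ := fun z => if z = x then 1 else 0

/-- Standard (unweighted) dot product `u^⊤ v`. -/
def dot (u v : V → ℝ) : ℝ := ∑ x, u x * v x

/-- Base polytope `B_e = conv{δ_x − δ_y : x,y ∈ e}`. -/
def Bp (e : Finset V) : Set (V → ℝ) :=
  convexHull ℝ {b : V → ℝ | ∃ x ∈ e, ∃ y ∈ e, b = delta x - delta y}

/-- The multivalued hypergraph Laplacian
`L(f) = {∑_e w(e) (b_e^⊤ f) b_e : b_e ∈ argmax_{b ∈ B_e} b^⊤ f}`. -/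
def Lap (H : Hypergraph V) (f : V → ℝ) : Set (V → ℝ) :=
  { g | ∃ b : Finset V → (V → ℝ),
      (∀ e ∈ H.E, b e ∈ Bp e ∧ ∀ b' ∈ Bp e, dot b' f ≤ dot (b e) f) ∧
      g = ∑ e ∈ H.E, (H.w e * dot (b e) f) • b e }

/-- `D⁻¹ f`. -/
def Dinv (H : Hypergraph V) (f : V → ℝ) : V → ℝ := fun x => f x / deg H x

/-- Normalized Laplacian `𝓛(f) = L(D⁻¹ f)`. -/
def NL (H : Hypergraph V) (f : V → ℝ) : Set (V → ℝ) := Lap H (Dinv H f)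

/-- The resolvent `J_λ = (I + λ𝓛)⁻¹`: it sends `f` to the (unique) `g` with
`f ∈ g + λ 𝓛(g)`. -/
def Resolvent (H : Hypergraph V) (l : ℝ) (f : V → ℝ) : V → ℝ :=
  Classical.epsilon fun g => ∃ h ∈ NL H g, f = g + l • h

/-- Adjacency: `x ∼ y` iff some hyperedge contains both. -/
def Adj (H : Hypergraph V) (x y : V) : Prop := ∃ e ∈ H.E, x ∈ e ∧ y ∈ e

/-- There is a chain of length `n` of successively adjacent vertices from `x` to `y`. -/
def chainProp (H : Hypergraph V) (x y : V) (n : ℕ) : Prop :=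
  ∃ z : ℕ → V, z 0 = x ∧ z n = y ∧ ∀ i < n, Adj H (z i) (z (i + 1))

/-- Connectedness of the hypergraph. -/
def Connected (H : Hypergraph V) : Prop := ∀ x y : V, ∃ n, chainProp H x y n

/-- Graph distance (as a natural number). -/
def hdistN (H : Hypergraph V) (x y : V) : ℕ := sInf {n | chainProp H x y n}

/-- Graph distance `d(x,y)` as a real number. -/
def gdist (H : Hypergraph V) (x y : V) : ℝ := (hdistN H x y : ℝ)

/-- Diameter `diam(H) = max_{x,y} d(x,y)`. -/
def hdiam (H : Hypergraph V) : ℝ :=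
  (((Finset.univ : Finset (V × V)).sup fun p => hdistN H p.1 p.2 : ℕ) : ℝ)

/-- Weighted `1`-Lipschitz functions: `⟨f, δ_x − δ_y⟩ ≤ d(x,y)` for all `x, y`. -/
def Lip1 (H : Hypergraph V) : Set (V → ℝ) :=
  { f | ∀ x y : V, inn H f (delta x - delta y) ≤ gdist H x y }

/-- The `λ`-nonlinear Kantorovich difference. -/
def KD (H : Hypergraph V) (l : ℝ) (x y : V) : ℝ :=
  sSup { r | ∃ f ∈ Lip1 H, r = inn H (Resolvent H l f) (delta x - delta y) }

/-- `κ_λ(x,y) = 1 − KD_λ(x,y)/d(x,y)`. -/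
def kappa (H : Hypergraph V) (l : ℝ) (x y : V) : ℝ := 1 - KD H l x y / gdist H x y

/-- Lower coarse Ricci curvature `κ̲(x,y) = liminf_{λ↓0} κ_λ(x,y)/λ`. -/
def kappaLower (H : Hypergraph V) (x y : V) : EReal :=
  Filter.liminf (fun l : ℝ => ((kappa H l x y / l : ℝ) : EReal)) (nhdsWithin 0 (Set.Ioi 0))

/-- Upper coarse Ricci curvature `κ̄(x,y) = limsup_{λ↓0} κ_λ(x,y)/λ`. -/
def kappaUpper (H : Hypergraph V) (x y : V) : EReal :=
  Filter.limsup (fun l : ℝ => ((kappa H l x y / l : ℝ) : EReal)) (nhdsWithin 0 (Set.Ioi 0))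

/-- Canonical restriction `𝓛⁰ f`: the unique element of minimal norm of `𝓛(f)`. -/
def L0 (H : Hypergraph V) (f : V → ℝ) : V → ℝ :=
  Classical.epsilon fun g => g ∈ NL H f ∧ ∀ h ∈ NL H f, nrm H g ≤ nrm H h

/-- The stationary distribution `π(x) = d_x / vol(V)`. -/
def piH (H : Hypergraph V) : V → ℝ := fun x => deg H x / vol H

/-- The energy `Q(h) = (1/2) ∑_e w(e) max_{x,y ∈ e} (h(x) − h(y))²`. -/
def Qform (H : Hypergraph V) (h : V → ℝ) : ℝ :=
  (1 / 2) * ∑ e ∈ H.E, H.w e * sSup { r | ∃ x ∈ e, ∃ y ∈ e, r = (h x - h y) ^ 2 }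


set_option linter.unusedSectionVars false

section Basic

variable (H : Hypergraph V)

lemma dot_add_left (u v w : V → ℝ) : dot (u + v) w = dot u w + dot v w := by
  simp [dot, add_mul, Finset.sum_add_distrib]

lemma dot_sub_left (u v w : V → ℝ) : dot (u - v) w = dot u w - dot v w := by
  simp [dot, sub_mul, Finset.sum_sub_distrib]

lemma dot_smul_left (c : ℝ) (u w : V → ℝ) : dot (c • u) w = c * dot u w := by
  simp [dot, Finset.mul_sum, mul_assoc]

lemma dot_sub_right (u v w : V → ℝ) : dot u (v - w) = dot u v - dot u w := by
  simp [dot, mul_sub, Finset.sum_sub_distrib]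

lemma dot_zero_left (w : V → ℝ) : dot 0 w = 0 := by simp [dot]

lemma dot_sum_left {ι : Type*} (s : Finset ι) (F : ι → (V → ℝ)) (u : V → ℝ) :
    dot (∑ i ∈ s, F i) u = ∑ i ∈ s, dot (F i) u := by
  simp only [dot, Finset.sum_apply, Finset.sum_mul]
  rw [Finset.sum_comm]

lemma dot_delta (p : V) (u : V → ℝ) : dot (delta p) u = u p := by
  simp [dot, delta, ite_mul]

lemma dot_delta_sub (p q : V) (u : V → ℝ) : dot (delta p - delta q) u = u p - u q := by
  rw [dot_sub_left, dot_delta, dot_delta]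

lemma inn_eq_dot (f g : V → ℝ) : inn H f g = dot f (Dinv H g) := by
  simp [inn, dot, Dinv, mul_div_assoc]

lemma inn_comm (f g : V → ℝ) : inn H f g = inn H g f := by
  simp [inn, mul_comm]

lemma inn_add_left (f g h : V → ℝ) : inn H (f + g) h = inn H f h + inn H g h := by
  simp [inn, add_mul, add_div, Finset.sum_add_distrib]

lemma inn_sub_left (f g h : V → ℝ) : inn H (f - g) h = inn H f h - inn H g h := by
  simp [inn, sub_mul, sub_div, Finset.sum_sub_distrib]

lemma inn_smul_left (c : ℝ) (f h : V → ℝ) : inn H (c • f) h = c * inn H f h := by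
  simp only [inn, Pi.smul_apply, smul_eq_mul, Finset.mul_sum]
  exact Finset.sum_congr rfl fun x _ => by ring

lemma inn_add_right (f g h : V → ℝ) : inn H f (g + h) = inn H f g + inn H f h := by
  simp [inn, mul_add, add_div, Finset.sum_add_distrib]

lemma inn_zero_right (f : V → ℝ) : inn H f 0 = 0 := by simp [inn]

lemma inn_self_nonneg (hdeg : ∀ x : V, 0 < deg H x) (f : V → ℝ) : 0 ≤ inn H f f :=
  Finset.sum_nonneg fun x _ => div_nonneg (mul_self_nonneg _) (hdeg x).le

lemma inn_self_eq_zero (hdeg : ∀ x : V, 0 < deg H x) {f : V → ℝ}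
    (h : inn H f f = 0) : f = 0 := by
  have h2 := (Finset.sum_eq_zero_iff_of_nonneg
    (fun x _ => div_nonneg (mul_self_nonneg (f x)) (hdeg x).le)).1 h
  funext x
  have h3 := h2 x (Finset.mem_univ x)
  have h4 : f x * f x = 0 := by
    by_contra hne
    exact hne (by
      have := (div_eq_zero_iff.1 h3)
      rcases this with h | h
      · exact h
      · exact absurd h (hdeg x).ne')
  have := mul_self_eq_zero.1 h4
  simpa using this

lemma nrm_nonneg (f : V → ℝ) : 0 ≤ nrm H f := Real.sqrt_nonneg _

lemma nrm_mul_self (hdeg : ∀ x : V, 0 < deg H x) (f : V → ℝ) :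
    nrm H f * nrm H f = inn H f f :=
  Real.mul_self_sqrt (inn_self_nonneg H hdeg f)

lemma inn_le_nrm (hdeg : ∀ x : V, 0 < deg H x) (f g : V → ℝ) :
    inn H f g ≤ nrm H f * nrm H g := by
  have key : (inn H f g) ^ 2 ≤ inn H f f * inn H g g := by
    have hrw : ∀ u v : V → ℝ, inn H u v
        = ∑ x, (u x / Real.sqrt (deg H x)) * (v x / Real.sqrt (deg H x)) := by
      intro u v
      refine Finset.sum_congr rfl fun x _ => ?_
      rw [div_mul_div_comm, Real.mul_self_sqrt (hdeg x).le]
    rw [hrw f g, hrw f f, hrw g g]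
    calc (∑ x, (f x / Real.sqrt (deg H x)) * (g x / Real.sqrt (deg H x))) ^ 2
        ≤ (∑ x, (f x / Real.sqrt (deg H x)) ^ 2) * (∑ x, (g x / Real.sqrt (deg H x)) ^ 2) := by
          exact Finset.sum_mul_sq_le_sq_mul_sq _ _ _
      _ = _ := by
          congr 1 <;> exact Finset.sum_congr rfl fun x _ => by ring
  calc inn H f g ≤ |inn H f g| := le_abs_self _
    _ = Real.sqrt ((inn H f g) ^ 2) := (Real.sqrt_sq_eq_abs _).symm
    _ ≤ Real.sqrt (inn H f f * inn H g g) := Real.sqrt_le_sqrt key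
    _ = nrm H f * nrm H g := by
        rw [nrm, nrm, Real.sqrt_mul (inn_self_nonneg H hdeg f)]

end Basic
section Polytope

variable (H : Hypergraph V)

/-- max over pairs in `e` of `u p - u q`. -/
def Me (e : Finset V) (u : V → ℝ) : ℝ :=
  if he : e.Nonempty then (e ×ˢ e).sup' (he.product he) (fun pq => u pq.1 - u pq.2) else 0

lemma Me_eq {e : Finset V} (he : e.Nonempty) (u : V → ℝ) :
    Me e u = (e ×ˢ e).sup' (he.product he) (fun pq => u pq.1 - u pq.2) := dif_pos he

lemma le_Me {e : Finset V} (he : e.Nonempty) {p q : V} (hp : p ∈ e) (hq : q ∈ e)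
    (u : V → ℝ) : u p - u q ≤ Me e u := by
  rw [Me_eq he]
  have hm : ((p, q) : V × V) ∈ e ×ˢ e := Finset.mem_product.2 ⟨hp, hq⟩
  exact Finset.le_sup' (f := fun pq : V × V => u pq.1 - u pq.2) hm

lemma Me_nonneg {e : Finset V} (he : e.Nonempty) (u : V → ℝ) : 0 ≤ Me e u := by
  obtain ⟨x, hx⟩ := id he
  simpa using le_Me he hx hx u

lemma exists_Me_eq {e : Finset V} (he : e.Nonempty) (u : V → ℝ) :
    ∃ p ∈ e, ∃ q ∈ e, Me e u = u p - u q := by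
  obtain ⟨pq, hpq, h⟩ := Finset.exists_mem_eq_sup' (he.product he)
    (fun pq : V × V => u pq.1 - u pq.2)
  rw [Finset.mem_product] at hpq
  exact ⟨pq.1, hpq.1, pq.2, hpq.2, (Me_eq he u).trans h⟩

lemma vertex_mem_Bp {e : Finset V} {p q : V} (hp : p ∈ e) (hq : q ∈ e) :
    delta p - delta q ∈ Bp e :=
  subset_convexHull ℝ _ ⟨p, hp, q, hq, rfl⟩

lemma zero_mem_Bp {e : Finset V} (he : e.Nonempty) : (0 : V → ℝ) ∈ Bp e := by
  obtain ⟨x, hx⟩ := he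
  have := vertex_mem_Bp (e := e) hx hx
  simpa using this

lemma convex_dot_le (u : V → ℝ) (c : ℝ) : Convex ℝ {b : V → ℝ | dot b u ≤ c} := by
  rintro x hx y hy s t hs ht hst
  simp only [Set.mem_setOf_eq] at *
  rw [dot_add_left, dot_smul_left, dot_smul_left]
  calc s * dot x u + t * dot y u ≤ s * c + t * c :=
        add_le_add (mul_le_mul_of_nonneg_left hx hs) (mul_le_mul_of_nonneg_left hy ht)
    _ = c := by rw [← add_mul, hst, one_mul]

lemma convex_dot_eq (u : V → ℝ) (c : ℝ) : Convex ℝ {b : V → ℝ | dot b u = c} := by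
  rintro x hx y hy s t hs ht hst
  simp only [Set.mem_setOf_eq] at *
  rw [dot_add_left, dot_smul_left, dot_smul_left, hx, hy, ← add_mul, hst, one_mul]

lemma dot_le_Me_of_mem_Bp {e : Finset V} (he : e.Nonempty) {b : V → ℝ}
    (hb : b ∈ Bp e) (u : V → ℝ) : dot b u ≤ Me e u := by
  refine convexHull_min ?_ (convex_dot_le u (Me e u)) hb
  rintro b' ⟨p, hp, q, hq, rfl⟩
  simp only [Set.mem_setOf_eq]
  rw [dot_delta_sub]
  exact le_Me he hp hq u

lemma dot_ones_eq_zero {e : Finset V} {b : V → ℝ} (hb : b ∈ Bp e) :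
    dot b (fun _ => (1 : ℝ)) = 0 := by
  refine convexHull_min ?_ (convex_dot_eq (fun _ => (1:ℝ)) 0) hb
  rintro b' ⟨p, hp, q, hq, rfl⟩
  simp only [Set.mem_setOf_eq]
  rw [dot_delta_sub]
  ring

lemma dot_sum_coords_zero {e : Finset V} {b : V → ℝ} (hb : b ∈ Bp e) :
    ∑ x, b x = 0 := by
  have := dot_ones_eq_zero hb
  simpa [dot] using this

lemma continuous_sup' {ι α : Type*} [TopologicalSpace α] :
    ∀ {s : Finset ι} (hs : s.Nonempty) (F : ι → α → ℝ), (∀ i ∈ s, Continuous (F i)) →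
      Continuous fun g => s.sup' hs (fun i => F i g) := by
  intro s hs
  induction hs using Finset.Nonempty.cons_induction with
  | singleton a => intro F hF; simpa [Finset.sup'_singleton] using hF a (by simp)
  | cons a s ha hs ih =>
      intro F hF
      have h1 : Continuous (F a) := hF a (by simp)
      have h2 := ih F (fun i hi => hF i (by simp [hi]))
      have : (fun g => (Finset.cons a s ha).sup' (Finset.cons_nonempty ha) (fun i => F i g))
          = fun g => max (F a g) (s.sup' hs (fun i => F i g)) := by
        funext g
        rw [Finset.sup'_cons]
      rw [this]
      exact h1.max h2

end Polytope
section LapLemmas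

variable (H : Hypergraph V)

lemma Dinv_zero : Dinv H (0 : V → ℝ) = 0 := by
  funext x; simp [Dinv]

lemma zero_mem_NL_zero : (0 : V → ℝ) ∈ NL H 0 := by
  refine ⟨fun _ => 0, fun e he => ⟨zero_mem_Bp (H.e_nonempty e he), fun b' hb' => ?_⟩, ?_⟩
  · simp [dot, Dinv]
  · simp [dot]

lemma inn_nonneg_of_mem_NL {g h : V → ℝ} (hh : h ∈ NL H g) : 0 ≤ inn H h g := by
  obtain ⟨b, hb, rfl⟩ := hh
  rw [inn_eq_dot, dot_sum_left]
  refine Finset.sum_nonneg fun e he => ?_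
  rw [dot_smul_left]
  have h1 := (H.w_pos e he).le
  have h2 := mul_self_nonneg (dot (b e) (Dinv H g))
  nlinarith

lemma inn_sub_nonneg_of_mem_NL {g g' h h' : V → ℝ} (hh : h ∈ NL H g)
    (hh' : h' ∈ NL H g') : 0 ≤ inn H (h - h') (g - g') := by
  obtain ⟨b, hb, rfl⟩ := hh
  obtain ⟨b', hb', rfl⟩ := hh'
  have hD : Dinv H (g - g') = Dinv H g - Dinv H g' := by
    funext x; simp [Dinv, sub_div]
  rw [inn_eq_dot, hD, dot_sub_left, dot_sum_left, dot_sum_left, ← Finset.sum_sub_distrib]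
  refine Finset.sum_nonneg fun e he => ?_
  have hne := H.e_nonempty e he
  set F := Dinv H g
  set F' := Dinv H g'
  set t := dot (b e) F with hts
  set t' := dot (b' e) F' with hts'
  have hw : 0 ≤ H.w e := (H.w_pos e he).le
  have hmax := (hb e he).2
  have hmax' := (hb' e he).2
  have hβ : dot (b e) F' ≤ t' := hmax' (b e) (hb e he).1
  have hγ : dot (b' e) F ≤ t := hmax (b' e) (hb' e he).1
  have ht : 0 ≤ t := by
    have := hmax 0 (zero_mem_Bp hne)
    simpa [dot, hts] using this
  have ht' : 0 ≤ t' := by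
    have := hmax' 0 (zero_mem_Bp hne)
    simpa [dot, hts'] using this
  rw [dot_smul_left, dot_smul_left, dot_sub_right, dot_sub_right]
  have e1 : H.w e * t * (t - dot (b e) F') - H.w e * t' * (dot (b' e) F - t')
      = H.w e * ((t - t')^2 + t * (t' - dot (b e) F') + t' * (t - dot (b' e) F)) := by
    ring
  rw [← hts, ← hts', e1]
  have h2 : 0 ≤ (t - t')^2 + t * (t' - dot (b e) F') + t' * (t - dot (b' e) F) := by
    have := sq_nonneg (t - t')
    have := mul_nonneg ht (sub_nonneg.2 hβ)
    have := mul_nonneg ht' (sub_nonneg.2 hγ)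
    linarith
  exact mul_nonneg hw h2

lemma NL_solution_unique (hdeg : ∀ x : V, 0 < deg H x) {l : ℝ} (hl : 0 < l)
    {f g g' : V → ℝ} (hg : ∃ h ∈ NL H g, f = g + l • h)
    (hg' : ∃ h ∈ NL H g', f = g' + l • h) : g = g' := by
  obtain ⟨h, hh, hf⟩ := hg
  obtain ⟨h', hh', hf'⟩ := hg'
  have key : g - g' = l • (h' - h) := by
    funext x
    have h0 : g x + l * h x = g' x + l * h' x := by
      have := congrFun (hf.symm.trans hf') x
      simpa using this
    simp only [Pi.sub_apply, Pi.smul_apply, smul_eq_mul]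
    linarith
  have h1 : inn H (g - g') (g - g') = -l * inn H (h - h') (g - g') := by
    nth_rewrite 1 [key]
    have : l • (h' - h) = (-l) • (h - h') := by
      funext x; simp only [Pi.smul_apply, Pi.sub_apply, smul_eq_mul]; ring
    rw [this, inn_smul_left]
  have h2 := inn_sub_nonneg_of_mem_NL H hh hh'
  have h3 : 0 ≤ inn H (g - g') (g - g') := inn_self_nonneg H hdeg _
  have h4 : inn H (g - g') (g - g') = 0 := by nlinarith
  have h5 := inn_self_eq_zero H hdeg h4
  funext x
  have := congrFun h5 x
  simp only [Pi.sub_apply, Pi.zero_apply] at this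
  linarith

lemma Lap_congr {u u' : V → ℝ} (h : ∀ e ∈ H.E, ∀ b ∈ Bp e, dot b u = dot b u') :
    Lap H u = Lap H u' := by
  unfold Lap
  ext k
  constructor
  · rintro ⟨b, hb, rfl⟩
    refine ⟨b, fun e he => ⟨(hb e he).1, fun b' hb' => ?_⟩,
      Finset.sum_congr rfl fun e he => ?_⟩
    · rw [← h e he b' hb', ← h e he (b e) (hb e he).1]
      exact (hb e he).2 b' hb'
    · rw [← h e he (b e) (hb e he).1]
  · rintro ⟨b, hb, rfl⟩
    refine ⟨b, fun e he => ⟨(hb e he).1, fun b' hb' => ?_⟩,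
      Finset.sum_congr rfl fun e he => ?_⟩
    · rw [h e he b' hb', h e he (b e) (hb e he).1]
      exact (hb e he).2 b' hb'
    · rw [h e he (b e) (hb e he).1]

lemma NL_shift (hdeg : ∀ x : V, 0 < deg H x) (g : V → ℝ) (c : ℝ) :
    NL H (g + c • deg H) = NL H g := by
  have hD : Dinv H (g + c • deg H) = fun x => Dinv H g x + c := by
    funext x
    simp only [Dinv, Pi.add_apply, Pi.smul_apply, smul_eq_mul, add_div]
    rw [mul_div_assoc, div_self (hdeg x).ne']
    ring
  unfold NL
  rw [hD]
  apply Lap_congr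
  intro e he b hb
  have h1 : ∑ x, b x = 0 := dot_sum_coords_zero hb
  simp only [dot, mul_add, Finset.sum_add_distrib]
  have h2 : ∑ x, b x * c = 0 := by
    rw [← Finset.sum_mul, h1, zero_mul]
  rw [h2, add_zero]

end LapLemmas
section Separation

open Filter Topology

variable (H : Hypergraph V)

/-- max of `U p - U q` over a finite set of pairs. -/
def msup (Q : Finset (V × V)) (U : V → ℝ) : ℝ :=
  if hne : Q.Nonempty then Q.sup' hne (fun pq => U pq.1 - U pq.2) else 0

lemma msup_le {Q : Finset (V × V)} {pq : V × V} (hpq : pq ∈ Q) (U : V → ℝ) :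
    U pq.1 - U pq.2 ≤ msup Q U := by
  unfold msup
  rw [dif_pos ⟨pq, hpq⟩]
  exact Finset.le_sup' (f := fun pq : V × V => U pq.1 - U pq.2) hpq

lemma msup_ex {Q : Finset (V × V)} (hne : Q.Nonempty) (U : V → ℝ) :
    ∃ pq ∈ Q, msup Q U = U pq.1 - U pq.2 := by
  obtain ⟨pq, hpq, h⟩ := Finset.exists_mem_eq_sup' hne (fun pq : V × V => U pq.1 - U pq.2)
  refine ⟨pq, hpq, ?_⟩
  unfold msup
  rw [dif_pos hne]
  exact h

lemma separation_lemma (c : Finset V → ℝ) (Q : Finset V → Finset (V × V))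
    (hQne : ∀ e ∈ H.E, (Q e).Nonempty) (h : V → ℝ)
    (hdot : ∀ U : V → ℝ, dot h U ≤ ∑ e ∈ H.E, c e * msup (Q e) U) :
    ∃ b : Finset V → (V → ℝ),
      (∀ e ∈ H.E, b e ∈ convexHull ℝ
        ((fun pq : V × V => delta pq.1 - delta pq.2) '' ((Q e : Set (V × V))))) ∧
      h = ∑ e ∈ H.E, (c e) • b e := by
  classical
  set K : Set (V → ℝ) := {k | ∃ b : Finset V → (V → ℝ),
      (∀ e ∈ H.E, b e ∈ convexHull ℝ
        ((fun pq : V × V => delta pq.1 - delta pq.2) '' ((Q e : Set (V × V))))) ∧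
      k = ∑ e ∈ H.E, (c e) • b e} with hK
  have hhK : h ∈ K := by
    by_contra hcon
    have hKconv : Convex ℝ K := by
      rintro k ⟨b, hb, rfl⟩ k' ⟨b', hb', rfl⟩ s t hs ht hst
      refine ⟨fun e => s • b e + t • b' e, fun e he => ?_, ?_⟩
      · exact (convex_convexHull ℝ _) (hb e he) (hb' e he) hs ht hst
      · rw [Finset.smul_sum, Finset.smul_sum, ← Finset.sum_add_distrib]
        refine Finset.sum_congr rfl fun e he => ?_
        rw [smul_add, smul_comm (c e) s, smul_comm (c e) t]
    have hKcomp : IsCompact K := by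
      set S : Set (Finset V → (V → ℝ)) := Set.pi Set.univ (fun e : Finset V =>
        if e ∈ H.E then convexHull ℝ
          ((fun pq : V × V => delta pq.1 - delta pq.2) '' ((Q e : Set (V × V))))
        else {0}) with hS
      have hScomp : IsCompact S := by
        apply isCompact_univ_pi
        intro e
        split_ifs with he
        · exact (((Q e).finite_toSet).image _).isCompact_convexHull ℝ
        · exact isCompact_singleton
      have hT : Continuous fun b : Finset V → (V → ℝ) =>
          ∑ e ∈ H.E, (c e) • b e := by
        apply continuous_finset_sum
        intro e _
        exact (continuous_apply (A := fun _ : Finset V => V → ℝ) e).const_smul (c e)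
      have himg : K = (fun b : Finset V → (V → ℝ) =>
          ∑ e ∈ H.E, (c e) • b e) '' S := by
        ext k
        constructor
        · rintro ⟨b, hb, rfl⟩
          refine ⟨fun e => if he : e ∈ H.E then b e else 0, fun e _ => ?_, ?_⟩
          · by_cases he : e ∈ H.E
            · simp only [dif_pos he, if_pos he]
              exact hb e he
            · simp only [dif_neg he, if_neg he]
              rfl
          · exact (Finset.sum_congr rfl fun e he => by simp only [dif_pos he]).symm
        · rintro ⟨b, hb, rfl⟩
          refine ⟨b, fun e he => ?_, rfl⟩
          have := hb e (Set.mem_univ e)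
          simp only [if_pos he] at this
          exact this
      rw [himg]
      exact hScomp.image hT
    obtain ⟨ψ, u, hu1, hu2⟩ :=
      geometric_hahn_banach_closed_point hKconv hKcomp.isClosed hcon
    set U : V → ℝ := fun x => ψ (fun j => if x = j then 1 else 0) with hUdef
    have hψ : ∀ z : V → ℝ, ψ z = dot z U := by
      intro z
      have hz := pi_eq_sum_univ z
      conv_lhs => rw [hz]
      rw [map_sum]
      simp only [dot]
      refine Finset.sum_congr rfl fun i _ => ?_
      rw [map_smul]
      simp [hUdef]
    choose pf hpf1 hpf2 using fun (e : Finset V) (he : e ∈ H.E) => msup_ex (hQne e he) U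
    set bstar : Finset V → (V → ℝ) :=
      fun e => if he : e ∈ H.E then delta (pf e he).1 - delta (pf e he).2 else 0 with hbs
    have hkK : (∑ e ∈ H.E, (c e) • bstar e) ∈ K := by
      refine ⟨bstar, fun e he => ?_, rfl⟩
      rw [hbs]
      simp only [dif_pos he]
      exact subset_convexHull ℝ _ ⟨pf e he, hpf1 e he, rfl⟩
    have hlt := hu1 _ hkK
    have hψk : ψ (∑ e ∈ H.E, (c e) • bstar e)
        = ∑ e ∈ H.E, (c e) * msup (Q e) U := by
      rw [hψ, dot_sum_left]
      refine Finset.sum_congr rfl fun e he => ?_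
      rw [dot_smul_left, hbs]
      simp only [dif_pos he]
      rw [dot_delta_sub, ← hpf2 e he]
    have hψh : ψ h = dot h U := hψ h
    have hfin := hdot U
    rw [hψk] at hlt
    rw [hψh] at hu2
    linarith
  exact hhK

end Separation
section Existence

open Filter Topology

variable (H : Hypergraph V)

lemma inn_expand (w v : V → ℝ) (t : ℝ) :
    inn H (w + t • v) (w + t • v)
      = inn H w w + 2 * t * inn H w v + t ^ 2 * inn H v v := by
  simp only [inn, Pi.add_apply, Pi.smul_apply, smul_eq_mul]
  rw [Finset.mul_sum, Finset.mul_sum, ← Finset.sum_add_distrib, ← Finset.sum_add_distrib]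
  exact Finset.sum_congr rfl fun x _ => by ring

lemma resolvent_exists [Nonempty V] (hdeg : ∀ x : V, 0 < deg H x) {l : ℝ} (hl : 0 < l)
    (f : V → ℝ) : ∃ g : V → ℝ, ∃ h ∈ NL H g, f = g + l • h := by
  classical
  set d : V → ℝ := deg H with hd
  set Φ : (V → ℝ) → ℝ := fun g => (1/2) * ∑ e ∈ H.E, H.w e * (Me e (Dinv H g))^2 with hΦdef
  set φ : (V → ℝ) → ℝ := fun g => inn H (g - f) (g - f) / 2 + l * Φ g with hφdef
  have hΦ0 : ∀ g, 0 ≤ Φ g := fun g =>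
    mul_nonneg (by norm_num)
      (Finset.sum_nonneg fun e he => mul_nonneg (H.w_pos e he).le (sq_nonneg _))
  -- continuity of φ
  have hMe_cont : ∀ e ∈ H.E, Continuous fun g : V → ℝ => Me e (Dinv H g) := by
    intro e he
    have hne := H.e_nonempty e he
    have hrw : (fun g : V → ℝ => Me e (Dinv H g))
        = fun g => (e ×ˢ e).sup' (hne.product hne)
            (fun pq => g pq.1 / d pq.1 - g pq.2 / d pq.2) := by
      funext g
      exact Me_eq hne _
    rw [hrw]
    exact continuous_sup' _ _ fun pq _ =>
      ((continuous_apply _).div_const _).sub ((continuous_apply _).div_const _)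
  have hφ_cont : Continuous φ := by
    have h1 : Continuous fun g : V → ℝ => inn H (g - f) (g - f) := by
      simp only [inn, Pi.sub_apply]
      apply continuous_finset_sum
      intro x _
      exact (((continuous_apply x).sub continuous_const).mul
        ((continuous_apply x).sub continuous_const)).div_const _
    have h2 : Continuous Φ := by
      rw [hΦdef]
      exact continuous_const.mul (continuous_finset_sum _ fun e he =>
        continuous_const.mul ((hMe_cont e he).pow 2))
    rw [hφdef]
    exact (h1.div_const 2).add (continuous_const.mul h2)
  -- minimum over a compact box is a global minimum
  have hφf : φ f = l * Φ f := by
    simp [hφdef, inn, sub_self]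
  set Dmax : ℝ := Finset.univ.sup' Finset.univ_nonempty d with hDmax
  have hDle : ∀ x, d x ≤ Dmax := fun x => Finset.le_sup' d (Finset.mem_univ x)
  have hDpos : 0 < Dmax := lt_of_lt_of_le (hdeg (Classical.arbitrary V)) (hDle _)
  set R : ℝ := Real.sqrt (2 * Dmax * (l * Φ f)) + 1 with hR
  have harg : (0:ℝ) ≤ 2 * Dmax * (l * Φ f) :=
    mul_nonneg (by linarith) (mul_nonneg hl.le (hΦ0 f))
  have hsq : Real.sqrt (2 * Dmax * (l * Φ f)) ^ 2 = 2 * Dmax * (l * Φ f) :=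
    Real.sq_sqrt harg
  have hR0 : 0 < R := by
    have := Real.sqrt_nonneg (2 * Dmax * (l * Φ f)); linarith
  have hR2 : 2 * Dmax * (l * Φ f) < R ^ 2 := by
    have h0 := Real.sqrt_nonneg (2 * Dmax * (l * Φ f))
    nlinarith
  set C : Set (V → ℝ) := Set.pi Set.univ (fun x => Set.Icc (f x - R) (f x + R)) with hC
  have hCc : IsCompact C := isCompact_univ_pi fun x => isCompact_Icc
  have hfC : f ∈ C := by
    intro x _
    exact ⟨by linarith, by linarith⟩
  obtain ⟨g₀, hg₀C, hg₀⟩ := hCc.exists_isMinOn ⟨f, hfC⟩ hφ_cont.continuousOn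
  have hmin : ∀ g, φ g₀ ≤ φ g := by
    intro g
    by_cases hg : g ∈ C
    · exact hg₀ hg
    · have hfg₀ : φ g₀ ≤ φ f := hg₀ hfC
      have hex : ∃ x, g x ∉ Set.Icc (f x - R) (f x + R) := by
        by_contra hcon
        push_neg at hcon
        exact hg (fun x _ => hcon x)
      obtain ⟨x, hx⟩ := hex
      rw [Set.mem_Icc] at hx
      push_neg at hx
      have hgx : R ^ 2 ≤ (g x - f x) ^ 2 := by
        rcases le_or_gt (f x - R) (g x) with h1 | h1
        · have h2 := hx h1
          nlinarith
        · nlinarith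
      have hterm : (g x - f x) * (g x - f x) / d x ≤ inn H (g - f) (g - f) := by
        have := Finset.single_le_sum
          (f := fun t => (g t - f t) * (g t - f t) / d t)
          (fun t _ => div_nonneg (mul_self_nonneg _) (hdeg t).le) (Finset.mem_univ x)
        simpa [inn] using this
      have hdx := hdeg x
      have h4 : R ^ 2 / (2 * Dmax) ≤ R ^ 2 / (2 * d x) :=
        div_le_div_of_nonneg_left (sq_nonneg R) (by linarith) (by linarith [hDle x])
      have h5 : R ^ 2 / (2 * d x) ≤ (g x - f x) * (g x - f x) / (2 * d x) := by
        have hq : (g x - f x) * (g x - f x) = (g x - f x) ^ 2 := by ring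
        rw [hq]
        exact div_le_div_of_nonneg_right hgx (by linarith)
      have h6 : (g x - f x) * (g x - f x) / (2 * d x)
          = ((g x - f x) * (g x - f x) / d x) / 2 := by
        rw [mul_comm 2 (d x), div_div]
      have h7 : l * Φ f < R ^ 2 / (2 * Dmax) := by
        have h7' : l * Φ f * (2 * Dmax) < R ^ 2 := by linarith [hR2]
        exact (lt_div_iff₀ (by linarith : (0:ℝ) < 2 * Dmax)).2 h7'
      have h8 : 0 ≤ l * Φ g := mul_nonneg hl.le (hΦ0 g)
      have h9 : φ g = inn H (g - f) (g - f) / 2 + l * Φ g := rfl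
      rw [hφf] at hfg₀
      rw [h9]
      have h10 : R ^ 2 / (2 * Dmax) ≤ inn H (g - f) (g - f) / 2 := by linarith
      calc φ g₀ ≤ l * Φ f := hfg₀
        _ ≤ R ^ 2 / (2 * Dmax) := h7.le
        _ ≤ inn H (g - f) (g - f) / 2 := h10
        _ ≤ inn H (g - f) (g - f) / 2 + l * Φ g := le_add_of_nonneg_right h8
  -- first-order optimality
  set F : V → ℝ := Dinv H g₀ with hF
  set M : Finset V → ℝ := fun e => Me e F with hM
  set P : Finset V → Finset (V × V) :=
    fun e => (e ×ˢ e).filter (fun pq => F pq.1 - F pq.2 = M e) with hP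
  have hPne : ∀ e ∈ H.E, (P e).Nonempty := by
    intro e he
    obtain ⟨p, hp, q, hq, hpq⟩ := exists_Me_eq (H.e_nonempty e he) F
    exact ⟨(p, q), Finset.mem_filter.2 ⟨Finset.mem_product.2 ⟨hp, hq⟩, hpq.symm⟩⟩
  set m : Finset V → (V → ℝ) → ℝ := fun e U => msup (P e) U with hm
  have hm_le : ∀ e ∈ H.E, ∀ U : V → ℝ, ∀ pq ∈ P e, U pq.1 - U pq.2 ≤ m e U :=
    fun e _ U pq hpq => msup_le hpq U
  have hm_ex : ∀ e ∈ H.E, ∀ U : V → ℝ, ∃ pq ∈ P e, m e U = U pq.1 - U pq.2 :=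
    fun e he U => msup_ex (hPne e he) U
  -- eventual exact linear expansion of Me along a ray
  have hkey : ∀ e ∈ H.E, ∀ U : V → ℝ, ∀ᶠ t in nhdsWithin (0:ℝ) (Set.Ioi 0),
      Me e (fun x => F x + t * U x) = M e + t * m e U := by
    intro e he U
    have hne := H.e_nonempty e he
    have hup : ∀ᶠ t in nhdsWithin (0:ℝ) (Set.Ioi 0), ∀ pq ∈ e ×ˢ e,
        (F pq.1 + t * U pq.1) - (F pq.2 + t * U pq.2) ≤ M e + t * m e U := by
      rw [Finset.eventually_all]
      intro pq hpq
      have hpe := Finset.mem_product.1 hpq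
      by_cases hmem : pq ∈ P e
      · have h1 : F pq.1 - F pq.2 = M e := (Finset.mem_filter.1 hmem).2
        have h2 : U pq.1 - U pq.2 ≤ m e U := hm_le e he U pq hmem
        filter_upwards [self_mem_nhdsWithin] with t ht
        have ht0 : (0:ℝ) < t := ht
        nlinarith
      · have h1 : F pq.1 - F pq.2 < M e := by
          refine lt_of_le_of_ne (le_Me hne hpe.1 hpe.2 F) fun hcon => hmem ?_
          exact Finset.mem_filter.2 ⟨hpq, hcon⟩
        have hcont : Filter.Tendsto
            (fun t : ℝ => ((F pq.1 + t * U pq.1) - (F pq.2 + t * U pq.2)) - (M e + t * m e U))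
            (nhds 0) (nhds ((F pq.1 - F pq.2) - M e)) := by
          have hc : Continuous (fun t : ℝ =>
              ((F pq.1 + t * U pq.1) - (F pq.2 + t * U pq.2)) - (M e + t * m e U)) :=
            (((continuous_const.add (continuous_id.mul continuous_const)).sub
              (continuous_const.add (continuous_id.mul continuous_const))).sub
              (continuous_const.add (continuous_id.mul continuous_const)))
          have h0 := hc.tendsto 0
          simpa using h0
        have hev := hcont.eventually_lt_const (by linarith : (F pq.1 - F pq.2) - M e < 0)
        filter_upwards [hev.filter_mono nhdsWithin_le_nhds] with t ht
        linarith
    have hlow : ∀ᶠ t in nhdsWithin (0:ℝ) (Set.Ioi 0),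
        M e + t * m e U ≤ Me e (fun x => F x + t * U x) := by
      obtain ⟨pq, hpq, hpqeq⟩ := hm_ex e he U
      have hFeq : F pq.1 - F pq.2 = M e := (Finset.mem_filter.1 hpq).2
      have hpe := Finset.mem_product.1 (Finset.mem_filter.1 hpq).1
      filter_upwards [self_mem_nhdsWithin] with t ht
      have hle := le_Me hne hpe.1 hpe.2 (fun x => F x + t * U x)
      rw [hpqeq]
      linarith
    filter_upwards [hup, hlow] with t h1 h2
    refine le_antisymm ?_ h2
    rw [Me_eq hne]
    apply Finset.sup'_le
    intro pq hpq
    simpa using h1 pq hpq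
  -- directional optimality inequality
  have hdir : ∀ v : V → ℝ,
      0 ≤ inn H (g₀ - f) v + l * ∑ e ∈ H.E, H.w e * (M e * m e (Dinv H v)) := by
    intro v
    set U : V → ℝ := Dinv H v with hU
    set A : ℝ := inn H (g₀ - f) v + l * ∑ e ∈ H.E, H.w e * (M e * m e U) with hA
    set B : ℝ := inn H v v / 2 + (l / 2) * ∑ e ∈ H.E, H.w e * (m e U) ^ 2 with hB
    have hev : ∀ᶠ t in nhdsWithin (0:ℝ) (Set.Ioi 0), 0 ≤ A + t * B := by
      have hall : ∀ᶠ t in nhdsWithin (0:ℝ) (Set.Ioi 0), ∀ e ∈ H.E,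
          Me e (fun x => F x + t * U x) = M e + t * m e U := by
        rw [Finset.eventually_all]
        exact fun e he => hkey e he U
      filter_upwards [hall, self_mem_nhdsWithin] with t hallt ht
      have ht0 : (0:ℝ) < t := ht
      have hDinv : Dinv H (g₀ + t • v) = fun x => F x + t * U x := by
        funext x
        simp only [Dinv, Pi.add_apply, Pi.smul_apply, smul_eq_mul, add_div, hF, hU]
        rw [mul_div_assoc]
      have hφt := hmin (g₀ + t • v)
      have hsub : g₀ + t • v - f = (g₀ - f) + t • v := by
        funext x; simp only [Pi.add_apply, Pi.sub_apply, Pi.smul_apply, smul_eq_mul]; ring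
      have e1 : inn H (g₀ + t • v - f) (g₀ + t • v - f)
          = inn H (g₀ - f) (g₀ - f) + 2 * t * inn H (g₀ - f) v + t ^ 2 * inn H v v := by
        rw [hsub, inn_expand]
      have e2 : Φ (g₀ + t • v) = (1/2) * ∑ e ∈ H.E, H.w e * (M e + t * m e U) ^ 2 := by
        rw [hΦdef]
        simp only []
        congr 1
        refine Finset.sum_congr rfl fun e he => ?_
        rw [hDinv, hallt e he]
      have e3 : ∑ e ∈ H.E, H.w e * (M e + t * m e U) ^ 2
          = ∑ e ∈ H.E, H.w e * (M e) ^ 2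
            + t * (2 * ∑ e ∈ H.E, H.w e * (M e * m e U))
            + t ^ 2 * ∑ e ∈ H.E, H.w e * (m e U) ^ 2 := by
        rw [Finset.mul_sum, Finset.mul_sum, Finset.mul_sum, ← Finset.sum_add_distrib,
          ← Finset.sum_add_distrib]
        exact Finset.sum_congr rfl fun e _ => by ring
      have e4 : φ (g₀ + t • v) = φ g₀ + t * A + t ^ 2 * B := by
        have hφ1 : φ (g₀ + t • v)
            = inn H (g₀ + t • v - f) (g₀ + t • v - f) / 2 + l * Φ (g₀ + t • v) := rfl
        have hφ2 : φ g₀ = inn H (g₀ - f) (g₀ - f) / 2 + l * Φ g₀ := rfl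
        have hΦg₀ : Φ g₀ = (1/2) * ∑ e ∈ H.E, H.w e * (M e) ^ 2 := by
          rw [hΦdef]
        rw [hφ1, hφ2, e1, e2, e3, hΦg₀, hA, hB]
        ring
      have h10 : 0 ≤ t * A + t ^ 2 * B := by
        rw [e4] at hφt
        linarith
      have h11 : t * 0 ≤ t * (A + t * B) := by
        rw [mul_zero]
        nlinarith
      have := le_of_mul_le_mul_left h11 ht0
      linarith
    have hten : Filter.Tendsto (fun t : ℝ => A + t * B)
        (nhdsWithin (0:ℝ) (Set.Ioi 0)) (nhds A) := by
      have hc : Continuous (fun t : ℝ => A + t * B) :=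
        continuous_const.add (continuous_id.mul continuous_const)
      have h0 := hc.tendsto 0
      simp only [zero_mul, add_zero] at h0
      exact h0.mono_left nhdsWithin_le_nhds
    exact ge_of_tendsto hten hev
  -- support function bound
  set h : V → ℝ := l⁻¹ • (f - g₀) with hh
  have hdot : ∀ U : V → ℝ, dot h U ≤ ∑ e ∈ H.E, (H.w e * M e) * (m e U) := by
    intro U
    have hv := hdir (fun x => U x * d x)
    have hDU : Dinv H (fun x => U x * d x) = U := by
      funext x
      simp only [Dinv]
      rw [mul_div_assoc, div_self (hdeg x).ne', mul_one]
    rw [hDU] at hv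
    have hinn : inn H (g₀ - f) (fun x => U x * d x) = dot (g₀ - f) U := by
      simp only [inn, dot]
      refine Finset.sum_congr rfl fun x _ => ?_
      have hx : deg H x ≠ 0 := (hdeg x).ne'
      field_simp
      ring
    rw [hinn] at hv
    have hdgf : dot (g₀ - f) U = -(l * dot h U) := by
      rw [hh, dot_smul_left, dot_sub_left, dot_sub_left]
      field_simp
      ring
    rw [hdgf] at hv
    have hsum : ∑ e ∈ H.E, H.w e * (M e * m e U) = ∑ e ∈ H.E, (H.w e * M e) * (m e U) :=
      Finset.sum_congr rfl fun e _ => by ring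
    rw [hsum] at hv
    nlinarith [hv]
  have hdot' : ∀ U : V → ℝ, dot h U ≤ ∑ e ∈ H.E, (fun e => H.w e * M e) e * msup (P e) U := by
    intro U
    simpa [hm] using hdot U
  obtain ⟨b, hbmem, hbeq⟩ :=
    separation_lemma H (fun e => H.w e * M e) P hPne h hdot'
  -- unpack membership into membership in the Laplacian
  have hvals : ∀ e ∈ H.E, dot (b e) F = M e := by
    intro e he
    have hsub : convexHull ℝ
        ((fun pq : V × V => delta pq.1 - delta pq.2) '' ((P e : Set (V × V))))
        ⊆ {z : V → ℝ | dot z F = M e} := by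
      apply convexHull_min
      · rintro _ ⟨pq, hpq, rfl⟩
        simp only [Set.mem_setOf_eq]
        rw [dot_delta_sub]
        exact (Finset.mem_filter.1 hpq).2
      · exact convex_dot_eq F (M e)
    exact hsub (hbmem e he)
  have hBpm : ∀ e ∈ H.E, b e ∈ Bp e := by
    intro e he
    refine convexHull_mono ?_ (hbmem e he)
    rintro _ ⟨pq, hpq, rfl⟩
    have h1 := Finset.mem_filter.1 hpq
    have h2 := Finset.mem_product.1 h1.1
    exact ⟨pq.1, h2.1, pq.2, h2.2, rfl⟩
  refine ⟨g₀, h, ⟨b, fun e he => ⟨hBpm e he, ?_⟩, ?_⟩, ?_⟩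
  · intro b' hb'
    rw [hvals e he]
    exact dot_le_Me_of_mem_Bp (H.e_nonempty e he) hb' F
  · rw [hbeq]
    exact Finset.sum_congr rfl fun e he => by rw [hvals e he]
  · rw [hh]
    funext x
    simp only [Pi.add_apply, Pi.smul_apply, Pi.sub_apply, smul_eq_mul]
    field_simp
    ring

end Existence
section ResolventProps

variable (H : Hypergraph V)

lemma resolvent_spec [Nonempty V] (hdeg : ∀ x : V, 0 < deg H x) {l : ℝ} (hl : 0 < l)
    (f : V → ℝ) :
    ∃ h ∈ NL H (Resolvent H l f), f = Resolvent H l f + l • h :=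
  Classical.epsilon_spec (resolvent_exists H hdeg hl f)

lemma resolvent_eq [Nonempty V] (hdeg : ∀ x : V, 0 < deg H x) {l : ℝ} (hl : 0 < l)
    {f g : V → ℝ} (hg : ∃ h ∈ NL H g, f = g + l • h) : Resolvent H l f = g :=
  NL_solution_unique H hdeg hl (resolvent_spec H hdeg hl f) hg

lemma resolvent_shift [Nonempty V] (hdeg : ∀ x : V, 0 < deg H x) {l : ℝ} (hl : 0 < l)
    (f : V → ℝ) (c : ℝ) :
    Resolvent H l (f + c • deg H) = Resolvent H l f + c • deg H := by
  obtain ⟨h, hh, hfe⟩ := resolvent_spec H hdeg hl f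
  apply resolvent_eq H hdeg hl
  refine ⟨h, ?_, ?_⟩
  · rw [NL_shift H hdeg _ c]
    exact hh
  · nth_rewrite 1 [hfe]
    funext x
    simp only [Pi.add_apply, Pi.smul_apply, smul_eq_mul]
    ring

end ResolventProps

section Distances

variable (H : Hypergraph V)

lemma chainProp_self (x : V) : chainProp H x x 0 :=
  ⟨fun _ => x, rfl, rfl, fun i h => absurd h (Nat.not_lt_zero i)⟩

lemma hdistN_self (x : V) : hdistN H x x = 0 :=
  Nat.sInf_eq_zero.2 (Or.inl (chainProp_self H x))

lemma gdist_nonneg (x y : V) : 0 ≤ gdist H x y := Nat.cast_nonneg _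

lemma hdistN_le_one {x y : V} (h : Adj H x y) : hdistN H x y ≤ 1 := by
  apply Nat.sInf_le
  refine ⟨fun i => if i = 0 then x else y, by simp, by simp, ?_⟩
  intro i hi
  have hi0 : i = 0 := by omega
  subst hi0
  simpa using h

lemma gdist_adj {x y : V} (hne : x ≠ y) (h : Adj H x y) : gdist H x y = 1 := by
  have h1 : hdistN H x y ≤ 1 := hdistN_le_one H h
  have h2 : hdistN H x y ≠ 0 := by
    intro h0
    have hne2 : {n | chainProp H x y n}.Nonempty := by
      obtain ⟨z, h0', h1', h2'⟩ : chainProp H x y 1 :=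
        ⟨fun i => if i = 0 then x else y, by simp, by simp, by
          intro i hi
          have : i = 0 := by omega
          subst this
          simpa using h⟩
      exact ⟨1, ⟨_, h0', h1', h2'⟩⟩
    have h3 : 0 ∈ {n | chainProp H x y n} := by
      rcases Nat.sInf_eq_zero.1 h0 with h | h
      · exact h
      · rw [h] at hne2
        exact absurd hne2 (by simp [Set.not_nonempty_empty])
    obtain ⟨z, hz0, hz1, -⟩ := h3
    exact hne (hz0 ▸ hz1 ▸ rfl)
  have h4 : hdistN H x y = 1 := le_antisymm h1 (Nat.one_le_iff_ne_zero.2 h2)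
  rw [gdist, h4]
  norm_num

end Distances

section KDlemmas

variable (H : Hypergraph V)

lemma inn_delta (f : V → ℝ) (x : V) : inn H f (delta x) = f x / deg H x := by
  simp [inn, delta, mul_ite, ite_div]

lemma inn_sub_right' (f g h : V → ℝ) : inn H f (g - h) = inn H f g - inn H f h := by
  simp [inn, mul_sub, sub_div, Finset.sum_sub_distrib]

lemma inn_delta_sub (f : V → ℝ) (x y : V) :
    inn H f (delta x - delta y) = f x / deg H x - f y / deg H y := by
  rw [inn_sub_right', inn_delta, inn_delta]

lemma lip_zero : (0 : V → ℝ) ∈ Lip1 H := by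
  intro x y
  have : inn H 0 (delta x - delta y) = 0 := by simp [inn]
  rw [this]
  exact gdist_nonneg H x y

lemma KD_set_nonempty (l : ℝ) (x y : V) :
    {r | ∃ f ∈ Lip1 H, r = inn H (Resolvent H l f) (delta x - delta y)}.Nonempty :=
  ⟨_, 0, lip_zero H, rfl⟩

lemma deg_inn_delta_sub (hdeg : ∀ x : V, 0 < deg H x) (x y : V) :
    inn H (deg H) (delta x - delta y) = 0 := by
  rw [inn_delta_sub, div_self (hdeg x).ne', div_self (hdeg y).ne']
  ring

lemma resolvent_inn_bound [Nonempty V] (hdeg : ∀ x : V, 0 < deg H x)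
    (hconn : Connected H) {l : ℝ} (hl : 0 < l) (x y : V) :
    ∃ C : ℝ, ∀ f ∈ Lip1 H, inn H (Resolvent H l f) (delta x - delta y) ≤ C := by
  classical
  set r : V → ℝ := fun t => max (gdist H t x) (gdist H x t) with hr
  refine ⟨Real.sqrt (∑ t, (r t) ^ 2 * deg H t) * nrm H (delta x - delta y), ?_⟩
  intro f hf
  set c : ℝ := f x / deg H x with hc
  set f' : V → ℝ := f - c • deg H with hf'
  have hf'x : f' x = 0 := by
    rw [hf']
    simp only [Pi.sub_apply, Pi.smul_apply, smul_eq_mul, hc]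
    rw [div_mul_eq_mul_div, mul_div_assoc, div_self (hdeg x).ne', mul_one, sub_self]
  have hdz : ∀ p q : V, inn H (f - c • deg H) (delta p - delta q)
      = inn H f (delta p - delta q) := by
    intro p q
    rw [inn_sub_left, inn_smul_left, deg_inn_delta_sub H hdeg, mul_zero, sub_zero]
  have hf'lip : f' ∈ Lip1 H := by
    intro p q
    rw [hf', hdz]
    exact hf p q
  have hfsplit : f = f' + c • deg H := by
    rw [hf']
    funext t
    simp only [Pi.add_apply, Pi.sub_apply, Pi.smul_apply, smul_eq_mul]
    ring
  have hJ : Resolvent H l f = Resolvent H l f' + c • deg H := by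
    conv_lhs => rw [hfsplit]
    exact resolvent_shift H hdeg hl f' c
  obtain ⟨h', hh', hfe⟩ := resolvent_spec H hdeg hl f'
  set g' : V → ℝ := Resolvent H l f' with hg'
  have hng : nrm H g' ≤ nrm H f' := by
    have h2 : inn H f' g' = inn H g' g' + l * inn H h' g' := by
      rw [hfe, inn_add_left, inn_smul_left]
    have h3 : 0 ≤ inn H h' g' := inn_nonneg_of_mem_NL H hh'
    have h1 : inn H g' g' ≤ inn H f' g' := by nlinarith [mul_nonneg hl.le h3]
    have h4 : inn H f' g' ≤ nrm H f' * nrm H g' := inn_le_nrm H hdeg f' g'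
    have h5 : nrm H g' * nrm H g' ≤ nrm H f' * nrm H g' := by
      rw [nrm_mul_self H hdeg]
      linarith
    rcases (nrm_nonneg H g').eq_or_lt with h0 | h0
    · rw [← h0]
      exact nrm_nonneg H f'
    · exact le_of_mul_le_mul_right h5 h0
  have hnf : nrm H f' ≤ Real.sqrt (∑ t, (r t) ^ 2 * deg H t) := by
    apply Real.sqrt_le_sqrt
    apply Finset.sum_le_sum
    intro t _
    have hb1 : f' t / deg H t ≤ r t := by
      have h6 := hf'lip t x
      rw [inn_delta_sub, hf'x] at h6
      simp only [zero_div, sub_zero] at h6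
      exact le_trans h6 (le_max_left _ _)
    have hb2 : -(f' t / deg H t) ≤ r t := by
      have h6 := hf'lip x t
      rw [inn_delta_sub, hf'x] at h6
      simp only [zero_div, zero_sub] at h6
      exact le_trans h6 (le_max_right _ _)
    have hdt : deg H t ≠ 0 := (hdeg t).ne'
    have h7 : f' t * f' t / deg H t = (f' t / deg H t) ^ 2 * deg H t := by
      field_simp
    rw [h7]
    have h8 : (f' t / deg H t) ^ 2 ≤ (r t) ^ 2 := sq_le_sq' (by linarith) hb1
    exact mul_le_mul_of_nonneg_right h8 (hdeg t).le
  rw [hJ, inn_add_left, inn_smul_left, deg_inn_delta_sub H hdeg, mul_zero, add_zero]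
  calc inn H g' (delta x - delta y) ≤ nrm H g' * nrm H (delta x - delta y) :=
        inn_le_nrm H hdeg g' _
    _ ≤ Real.sqrt (∑ t, (r t) ^ 2 * deg H t) * nrm H (delta x - delta y) :=
        mul_le_mul_of_nonneg_right (hng.trans hnf) (nrm_nonneg H _)

lemma KD_le_add [Nonempty V] (hdeg : ∀ x : V, 0 < deg H x) (hconn : Connected H)
    {l : ℝ} (hl : 0 < l) (x y z : V) : KD H l x y ≤ KD H l x z + KD H l z y := by
  obtain ⟨C1, hC1⟩ := resolvent_inn_bound H hdeg hconn hl x z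
  obtain ⟨C2, hC2⟩ := resolvent_inn_bound H hdeg hconn hl z y
  have hbdd1 : BddAbove {r | ∃ f ∈ Lip1 H, r = inn H (Resolvent H l f) (delta x - delta z)} :=
    ⟨C1, by rintro s ⟨f, hf, rfl⟩; exact hC1 f hf⟩
  have hbdd2 : BddAbove {r | ∃ f ∈ Lip1 H, r = inn H (Resolvent H l f) (delta z - delta y)} :=
    ⟨C2, by rintro s ⟨f, hf, rfl⟩; exact hC2 f hf⟩
  apply csSup_le (KD_set_nonempty H l x y)
  rintro s ⟨f, hf, rfl⟩
  have hsplit : inn H (Resolvent H l f) (delta x - delta y)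
      = inn H (Resolvent H l f) (delta x - delta z)
        + inn H (Resolvent H l f) (delta z - delta y) := by
    rw [inn_delta_sub, inn_delta_sub, inn_delta_sub]
    ring
  rw [hsplit]
  exact add_le_add (le_csSup hbdd1 ⟨f, hf, rfl⟩) (le_csSup hbdd2 ⟨f, hf, rfl⟩)

lemma KD_self (l : ℝ) (x : V) : KD H l x x = 0 := by
  unfold KD
  have hset : {r | ∃ f ∈ Lip1 H, r = inn H (Resolvent H l f) (delta x - delta x)}
      = {(0:ℝ)} := by
    ext s
    simp only [Set.mem_setOf_eq, Set.mem_singleton_iff, sub_self]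
    constructor
    · rintro ⟨f, hf, rfl⟩
      exact inn_zero_right H _
    · rintro rfl
      exact ⟨0, lip_zero H, (inn_zero_right H _).symm⟩
  rw [hset, csSup_singleton]

lemma KD_chain [Nonempty V] (hdeg : ∀ x : V, 0 < deg H x) (hconn : Connected H)
    {l : ℝ} (hl : 0 < l) (z : ℕ → V) :
    ∀ n : ℕ, KD H l (z 0) (z n) ≤ ∑ i ∈ Finset.range n, KD H l (z i) (z (i + 1)) := by
  intro n
  induction n with
  | zero => simp [KD_self]
  | succ n ih =>
      calc KD H l (z 0) (z (n + 1))
          ≤ KD H l (z 0) (z n) + KD H l (z n) (z (n + 1)) :=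
            KD_le_add H hdeg hconn hl _ _ _
        _ ≤ ∑ i ∈ Finset.range (n + 1), KD H l (z i) (z (i + 1)) := by
            rw [Finset.sum_range_succ]
            linarith

lemma gdist_self (x : V) : gdist H x x = 0 := by
  rw [gdist, hdistN_self]
  norm_num

lemma kappa_self (l : ℝ) (x : V) : kappa H l x x = 1 := by
  unfold kappa
  rw [KD_self, gdist_self]
  norm_num

end KDlemmas
section Final

open Filter Topology

variable (H : Hypergraph V)

lemma kappa_chain [Nonempty V] (hdeg : ∀ x : V, 0 < deg H x) (hconn : Connected H)
    {l : ℝ} (hl : 0 < l) {x y : V} {n : ℕ} (hn : 0 < n) (z : ℕ → V)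
    (h0 : z 0 = x) (hn' : z n = y) (hdxy : gdist H x y = (n : ℝ))
    (hsteps : ∀ i < n, kappa H l (z i) (z (i + 1)) = 1 - KD H l (z i) (z (i + 1))) :
    (∑ i ∈ Finset.range n, kappa H l (z i) (z (i + 1))) / (n : ℝ) ≤ kappa H l x y := by
  have hKD := KD_chain H hdeg hconn hl z n
  rw [h0, hn'] at hKD
  have hkap : kappa H l x y = 1 - KD H l x y / (n : ℝ) := by
    unfold kappa
    rw [hdxy]
  rw [hkap]
  have hsum : ∑ i ∈ Finset.range n, kappa H l (z i) (z (i + 1))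
      = (n : ℝ) - ∑ i ∈ Finset.range n, KD H l (z i) (z (i + 1)) := by
    rw [Finset.sum_congr rfl (fun i hi => hsteps i (Finset.mem_range.1 hi)),
      Finset.sum_sub_distrib, Finset.sum_const, Finset.card_range]
    simp
  rw [hsum]
  have hnpos : (0 : ℝ) < (n : ℝ) := by exact_mod_cast hn
  rw [div_le_iff₀ hnpos]
  have hexp : (1 - KD H l x y / (n : ℝ)) * (n : ℝ) = (n : ℝ) - KD H l x y := by
    field_simp
  rw [hexp]
  linarith

end Final
open Filter Topology in
/-- a lower bound on `κ̲` over adjacent pairs implies the same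
lower bound over all pairs. -/
theorem stmt14 [Nonempty V] (H : Hypergraph V) (hconn : Connected H)
    (hdeg : ∀ x : V, 0 < deg H x) (hV : 2 ≤ Fintype.card V) (a : ℝ)
    (hadj : ∀ x y : V, x ≠ y → Adj H x y → (a : EReal) ≤ kappaLower H x y) :
    ∀ x y : V, x ≠ y → (a : EReal) ≤ kappaLower H x y := by
  intro x y hxy
  have hne : {n | chainProp H x y n}.Nonempty := hconn x y
  set n := hdistN H x y with hn
  have hchain : chainProp H x y n := Nat.sInf_mem hne
  obtain ⟨z, hz0, hzn, hzadj⟩ := hchain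
  have hn0 : 0 < n := by
    rcases Nat.eq_zero_or_pos n with h | h
    · exfalso
      apply hxy
      rw [← hz0, ← hzn, h]
    · exact h
  have hdxy : gdist H x y = (n : ℝ) := by rw [gdist, ← hn]
  unfold kappaLower
  rw [Filter.le_liminf_iff]
  intro c' hc'
  obtain ⟨c, hc1, hc2⟩ := EReal.exists_between_coe_real hc'
  have hstepev : ∀ i < n, ∀ᶠ lam in nhdsWithin (0:ℝ) (Set.Ioi 0),
      c < kappa H lam (z i) (z (i + 1)) / lam := by
    intro i hi
    by_cases heq : z i = z (i + 1)
    · have hk : ∀ lam : ℝ, kappa H lam (z i) (z (i + 1)) = 1 := by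
        intro lam
        rw [← heq]
        exact kappa_self H lam (z i)
      have habs : (0:ℝ) < 1 / (|c| + 1) := by positivity
      have hIoo : Set.Ioo (0:ℝ) (1 / (|c| + 1)) ∈ nhdsWithin (0:ℝ) (Set.Ioi 0) :=
        Ioo_mem_nhdsGT_of_mem ⟨le_rfl, habs⟩
      filter_upwards [hIoo] with lam hlam
      rw [hk lam]
      have h1 : (0:ℝ) < lam := hlam.1
      have h2 : lam < 1 / (|c| + 1) := hlam.2
      have h3 : lam * (|c| + 1) < 1 := by
        have := (lt_div_iff₀ (by positivity : (0:ℝ) < |c| + 1)).1 h2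
        linarith
      have h4 : |c| + 1 < 1 / lam := by
        rw [lt_div_iff₀ h1]
        linarith
      have h5 := le_abs_self c
      calc c ≤ |c| := h5
        _ < 1 / lam := by linarith
    · have hadjij := hzadj i hi
      have hli := hadj _ _ heq hadjij
      have hlt : (c : EReal) < kappaLower H (z i) (z (i + 1)) :=
        lt_of_lt_of_le hc2 hli
      unfold kappaLower at hlt
      have hev := Filter.eventually_lt_of_lt_liminf hlt
      filter_upwards [hev] with lam hlam
      exact_mod_cast hlam
  have hallev : ∀ᶠ lam in nhdsWithin (0:ℝ) (Set.Ioi 0),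
      ∀ i ∈ Finset.range n, c < kappa H lam (z i) (z (i + 1)) / lam := by
    rw [Finset.eventually_all]
    intro i hi
    exact hstepev i (Finset.mem_range.1 hi)
  filter_upwards [hallev, self_mem_nhdsWithin] with lam hall hlam
  have hlam0 : (0:ℝ) < lam := hlam
  have hsteps : ∀ i < n, kappa H lam (z i) (z (i + 1)) = 1 - KD H lam (z i) (z (i + 1)) := by
    intro i hi
    by_cases heq : z i = z (i + 1)
    · rw [← heq, kappa_self, KD_self]
      norm_num
    · have hg1 : gdist H (z i) (z (i + 1)) = 1 := gdist_adj H heq (hzadj i hi)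
      unfold kappa
      rw [hg1, div_one]
  have hchainineq := kappa_chain H hdeg hconn hlam0 hn0 z hz0 hzn hdxy hsteps
  have hnpos : (0 : ℝ) < (n : ℝ) := by exact_mod_cast hn0
  have hsum1 : (n : ℝ) * c < ∑ i ∈ Finset.range n, kappa H lam (z i) (z (i + 1)) / lam := by
    have hr : ((Finset.range n) : Finset ℕ).Nonempty := Finset.nonempty_range_iff.2 hn0.ne'
    have := Finset.sum_lt_sum_of_nonempty hr
      (f := fun _ => c) (g := fun i => kappa H lam (z i) (z (i + 1)) / lam)
      (fun i hi => hall i hi)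
    simpa [Finset.sum_const, Finset.card_range, nsmul_eq_mul] using this
  have hsum2 : (∑ i ∈ Finset.range n, kappa H lam (z i) (z (i + 1))) / lam
      = ∑ i ∈ Finset.range n, kappa H lam (z i) (z (i + 1)) / lam := Finset.sum_div _ _ _
  have hdiv : (∑ i ∈ Finset.range n, kappa H lam (z i) (z (i + 1))) / (n : ℝ) / lam
      ≤ kappa H lam x y / lam :=
    div_le_div_of_nonneg_right hchainineq hlam0.le
  have hre : (∑ i ∈ Finset.range n, kappa H lam (z i) (z (i + 1))) / (n : ℝ) / lam
      = (∑ i ∈ Finset.range n, kappa H lam (z i) (z (i + 1)) / lam) / (n : ℝ) := by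
    rw [div_div, mul_comm (n:ℝ) lam, ← div_div, hsum2]
  have hclt : c < kappa H lam x y / lam := by
    have h6 : c < (∑ i ∈ Finset.range n, kappa H lam (z i) (z (i + 1)) / lam) / (n : ℝ) := by
      rw [lt_div_iff₀ hnpos]
      calc c * (n:ℝ) = (n:ℝ) * c := by ring
        _ < _ := hsum1
    calc c < (∑ i ∈ Finset.range n, kappa H lam (z i) (z (i + 1)) / lam) / (n : ℝ) := h6
      _ = (∑ i ∈ Finset.range n, kappa H lam (z i) (z (i + 1))) / (n : ℝ) / lam := hre.symm
      _ ≤ kappa H lam x y / lam := hdiv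
  calc c' < (c : EReal) := hc1
    _ < ((kappa H lam x y / lam : ℝ) : EReal) := by exact_mod_cast hclt
end HypRicci
end
end

section
/- Assume #V ≥ 2. Setting κ_λ := min_{x≠y} κ_λ(x,y) for each λ > 0, one has liminf_{λ↓0} κ_λ/λ = min_{x≠y} κ̲(x,y). -/
open scoped BigOperators

noncomputable section

namespace HypRicci

variable {V : Type*} [Fintype V] [DecidableEq V]

private lemma map_inf'_mono {ι α β : Type*} [LinearOrder α] [LinearOrder β] {m : α → β}
    (hm : Monotone m) {s : Finset ι} (hs : s.Nonempty) (f : ι → α) :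
    m (s.inf' hs f) = s.inf' hs (fun i => m (f i)) := by
  obtain ⟨i0, hi0, heq⟩ := Finset.exists_mem_eq_inf' hs f
  obtain ⟨j0, hj0, heq'⟩ := Finset.exists_mem_eq_inf' hs (fun i => m (f i))
  apply le_antisymm
  · rw [heq']; exact hm (heq ▸ Finset.inf'_le f hj0)
  · rw [heq]; exact Finset.inf'_le _ hi0

/-- with `κ_λ := min_{x≠y} κ_λ(x,y)`, one has
`liminf_{λ↓0} κ_λ/λ = min_{x≠y} κ̲(x,y)`. -/
theorem stmt15 [Nonempty V] (H : Hypergraph V) (hconn : Connected H)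
    (hdeg : ∀ x : V, 0 < deg H x) (hV : 2 ≤ Fintype.card V) :
    Filter.liminf
        (fun l : ℝ =>
          ((sInf {r : ℝ | ∃ x y : V, x ≠ y ∧ r = kappa H l x y} / l : ℝ) : EReal))
        (nhdsWithin 0 (Set.Ioi 0))
      = sInf {r : EReal | ∃ x y : V, x ≠ y ∧ r = kappaLower H x y} := by
  classical
  obtain ⟨a, b, hab⟩ := Fintype.exists_pair_of_one_lt_card (by omega : 1 < Fintype.card V)
  set P : Finset (V × V) := Finset.univ.filter (fun p => p.1 ≠ p.2) with hPdef
  have hP : P.Nonempty := ⟨(a, b), by simp [hPdef, hab]⟩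
  have hset : {r : EReal | ∃ x y : V, x ≠ y ∧ r = kappaLower H x y}
      = ↑(P.image fun p => kappaLower H p.1 p.2) := by
    ext r
    simp only [Set.mem_setOf_eq, Finset.coe_image, Set.mem_image, Finset.mem_coe,
      Finset.mem_filter, Finset.mem_univ, true_and, hPdef]
    constructor
    · rintro ⟨x, y, hxy, rfl⟩; exact ⟨(x, y), hxy, rfl⟩
    · rintro ⟨⟨x, y⟩, hxy, rfl⟩; exact ⟨x, y, hxy, rfl⟩
  have hRHS : sInf {r : EReal | ∃ x y : V, x ≠ y ∧ r = kappaLower H x y}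
      = P.inf' hP (fun p => kappaLower H p.1 p.2) := by
    rw [hset, ← Finset.inf_id_eq_sInf, ← Finset.inf'_eq_inf (hP.image _), Finset.inf'_image]
    rfl
  have hLHS : ∀ l : ℝ, 0 < l →
      ((sInf {r : ℝ | ∃ x y : V, x ≠ y ∧ r = kappa H l x y} / l : ℝ) : EReal)
        = P.inf' hP (fun p => ((kappa H l p.1 p.2 / l : ℝ) : EReal)) := by
    intro l hl
    have hset2 : {r : ℝ | ∃ x y : V, x ≠ y ∧ r = kappa H l x y}
        = ↑(P.image fun p => kappa H l p.1 p.2) := by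
      ext r
      simp only [Set.mem_setOf_eq, Finset.coe_image, Set.mem_image, Finset.mem_coe,
        Finset.mem_filter, Finset.mem_univ, true_and, hPdef]
      constructor
      · rintro ⟨x, y, hxy, rfl⟩; exact ⟨(x, y), hxy, rfl⟩
      · rintro ⟨⟨x, y⟩, hxy, rfl⟩; exact ⟨x, y, hxy, rfl⟩
    have h1 : sInf {r : ℝ | ∃ x y : V, x ≠ y ∧ r = kappa H l x y}
        = P.inf' hP (fun p => kappa H l p.1 p.2) := by
      rw [hset2, Finset.Nonempty.csInf_eq_min' (hP.image _), Finset.min'_eq_inf',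
        Finset.inf'_image]
      rfl
    rw [h1]
    have hm : Monotone (fun r : ℝ => ((r / l : ℝ) : EReal)) := fun r s hrs =>
      EReal.coe_le_coe_iff.2 ((div_le_div_iff_of_pos_right hl).2 hrs)
    exact map_inf'_mono hm hP _
  have hev : ∀ᶠ l in nhdsWithin (0 : ℝ) (Set.Ioi 0),
      ((sInf {r : ℝ | ∃ x y : V, x ≠ y ∧ r = kappa H l x y} / l : ℝ) : EReal)
        = P.inf' hP (fun p => ((kappa H l p.1 p.2 / l : ℝ) : EReal)) :=
    Filter.eventually_of_mem self_mem_nhdsWithin (fun l hl => hLHS l hl)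
  rw [Filter.liminf_congr hev, liminf_finset_inf' hP, hRHS]
  rfl


end HypRicci
end
end
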